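/- Let 𝔸 be a finite algebra with |A| = k, let n be a positive integer, and let ρ ∈ Inv(𝔸) be a nice relation of arity m with m > 2k²·n². Then there exists a relation σ ∈ Inv(𝔸) of arity 2n + k such that σ ≠ A^{2n+k} and for all c_1,…,c_n, d_1,…,d_n, e_1,…,e_k ∈ A: if there exist i, j ∈ {1,…,n} with c_i = d_j, then (c_1,…,c_n, d_1,…,d_n, e_1,…,e_k) ∈ σ. -/

import Mathlib

/-- An algebra: a carrier type `A` together with an indexed family of finitary operations. -/
structure MyAlgebra (A : Type) where
  ι : Type
  arity : ι → ℕ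
  op : ∀ i : ι, (Fin (arity i) → A) → A

namespace MyAlgebra

variable {A : Type}

/-- A set of `n`-tuples is closed under coordinatewise application of all operations. -/
def Closed (𝔸 : MyAlgebra A) {n : ℕ} (S : Set (Fin n → A)) : Prop :=
  ∀ i : 𝔸.ι, ∀ γ : Fin (𝔸.arity i) → (Fin n → A),
    (∀ j, γ j ∈ S) → (fun t : Fin n => 𝔸.op i (fun j => γ j t)) ∈ S

/-- The subalgebra of `𝔸^n` generated by `X`. -/
def gen (𝔸 : MyAlgebra A) {n : ℕ} (X : Set (Fin n → A)) : Set (Fin n → A) :=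
  ⋂₀ {S : Set (Fin n → A) | X ⊆ S ∧ 𝔸.Closed S}

/-- Polynomially generated powers. -/
def PGP (𝔸 : MyAlgebra A) : Prop :=
  ∃ p : Polynomial ℕ, ∀ n : ℕ, ∃ X : Finset (Fin n → A),
    X.card ≤ p.eval n ∧ 𝔸.gen (X : Set (Fin n → A)) = Set.univ

/-- Exponentially generated powers. -/
def EGP (𝔸 : MyAlgebra A) : Prop :=
  ∃ b C : ℝ, 1 < b ∧ 0 < C ∧ ∀ n : ℕ, ∀ X : Finset (Fin n → A),
    𝔸.gen (X : Set (Fin n → A)) = Set.univ → C * b ^ n ≤ (X.card : ℝ)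

/-- Every operation is idempotent. -/
def Idempotent (𝔸 : MyAlgebra A) : Prop :=
  ∀ i : 𝔸.ι, ∀ a : A, 𝔸.op i (fun _ => a) = a

end MyAlgebra

/-- The number of switches of a tuple: indices `i` with `a i ≠ a (i+1)`,
encoded as pairs of consecutive indices. -/
def numSwitches {A : Type} [DecidableEq A] {n : ℕ} (a : Fin n → A) : ℕ :=
  (Finset.univ.filter (fun p : Fin n × Fin n =>
    (p.2 : ℕ) = (p.1 : ℕ) + 1 ∧ a p.1 ≠ a p.2)).card

/-- `𝔸` is switchable: for some `r`, every power is generated by tuples with at most `r` switches. -/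
def MyAlgebra.Switchable {A : Type} [DecidableEq A] (𝔸 : MyAlgebra A) : Prop :=
  ∃ r : ℕ, ∀ n : ℕ, 𝔸.gen {a : Fin n → A | numSwitches a ≤ r} = Set.univ

/-- A nice relation: not full, and contains every tuple with two equal consecutive entries. -/
def Nice {A : Type} {m : ℕ} (ρ : Set (Fin m → A)) : Prop :=
  ρ ≠ Set.univ ∧ ∀ c : Fin m → A,
    (∃ i : ℕ, ∃ h : i + 1 < m, c ⟨i, by omega⟩ = c ⟨i + 1, h⟩) → c ∈ ρ

/-- `D_{A,m}`: tuples of length `2m` where some pair `(a_{2i+1}, a_{2i+2})` is equal. -/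
def Drel (A : Type) (m : ℕ) : Set (Fin (2 * m) → A) :=
  {a | ∃ i : ℕ, ∃ h : 2 * i + 1 < 2 * m, a ⟨2 * i, by omega⟩ = a ⟨2 * i + 1, h⟩}

/-- `f` preserves the relation `σ`. -/
def Preserves {A : Type} {s m : ℕ} (f : (Fin s → A) → A) (σ : Set (Fin m → A)) : Prop :=
  ∀ γ : Fin s → (Fin m → A), (∀ j, γ j ∈ σ) → (fun t : Fin m => f (fun j => γ j t)) ∈ σ

/-- `f` is `αβ`-projective. -/
def ABProjective {A : Type} (α β : Set A) {s : ℕ} (f : (Fin s → A) → A) : Prop :=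
  ∃ j : Fin s, ∀ a : Fin s → A, ∀ S ∈ ({α, β} : Set (Set A)), a j ∈ S → f a ∈ S

/-- `σ_n(x₁,…,x_{2n}) ⇔ ρ(x₁,x₂) ∨ … ∨ ρ(x_{2n-1},x_{2n})`. -/
def sigmaRel {A : Type} (ρ : Set (A × A)) (n : ℕ) : Set (Fin (2 * n) → A) :=
  {t | ∃ i : ℕ, ∃ h : 2 * i + 1 < 2 * n, (t ⟨2 * i, by omega⟩, t ⟨2 * i + 1, h⟩) ∈ ρ}

/-- from a nice invariant relation of large arity one obtains an invariant
relation `σ` of arity `2n + k` that is not full and contains all tuples whose first block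
and second block share a common value. -/
theorem stmt_6 {A : Type} [Fintype A] (𝔸 : MyAlgebra A) (k : ℕ)
    (hk : Fintype.card A = k) (n : ℕ) (hn : 0 < n) (m : ℕ)
    (hm : 2 * k ^ 2 * n ^ 2 < m)
    (ρ : Set (Fin m → A)) (hρ : Nice ρ) (hinv : 𝔸.Closed ρ) :
    ∃ σ : Set (Fin (2 * n + k) → A), 𝔸.Closed σ ∧ σ ≠ Set.univ ∧
      ∀ t : Fin (2 * n + k) → A,
        (∃ i j : Fin n, t ⟨(i : ℕ), by have := i.isLt; omega⟩
                      = t ⟨n + (j : ℕ), by have := j.isLt; omega⟩) →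
        t ∈ σ := by
  classical
  subst hk
  set k := Fintype.card A with hk
  -- A is nonempty
  have hk1 : 1 ≤ k := by
    rcases Nat.eq_zero_or_pos k with h0 | h1
    · exfalso
      have hA : IsEmpty A := Fintype.card_eq_zero_iff.mp h0
      exact hρ.1 (Set.eq_univ_of_forall (fun c => (hA.elim (c ⟨0, by omega⟩))))
    · exact h1
  obtain ⟨hρne, hnice⟩ := hρ
  obtain ⟨c, hc⟩ : ∃ c : Fin m → A, c ∉ ρ := by
    by_contra h
    push_neg at h
    exact hρne (Set.eq_univ_of_forall h)
  have hkn : 1 ≤ k ^ 2 * n ^ 2 := by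
    have h1 : 1 ≤ k ^ 2 := Nat.one_le_pow _ _ hk1
    have h2 : 1 ≤ n ^ 2 := Nat.one_le_pow _ _ hn
    exact Nat.one_le_iff_ne_zero.mpr (by positivity)
  have hm' : 2 * (k ^ 2 * n ^ 2) < m := by rw [← mul_assoc]; exact hm
  have hm2 : 2 ≤ m := by omega
  have hcons : ∀ i : ℕ, ∀ h : i + 1 < m, c ⟨i, by omega⟩ ≠ c ⟨i + 1, h⟩ := by
    intro i h heq
    exact hc (hnice c ⟨i, h, heq⟩)
  set e := Fintype.equivFin A with he
  set g : Fin (m - 1) → A × A := fun q =>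
    (c ⟨(q : ℕ), by have := q.isLt; omega⟩, c ⟨(q : ℕ) + 1, by have := q.isLt; omega⟩) with hg
  -- pigeonhole
  have hpig : ∃ v : A × A, v ∈ (Finset.univ : Finset (A × A)) ∧
      n ^ 2 - 1 < (Finset.univ.filter (fun q : Fin (m - 1) => g q = v)).card := by
    have hcard : (Finset.univ : Finset (A × A)).card * (n ^ 2 - 1)
        < (Finset.univ : Finset (Fin (m - 1))).card := by
      have h1 : (Finset.univ : Finset (A × A)).card = k * k := by
        simp [Finset.card_univ, Fintype.card_prod, hk]
      have h2 : (Finset.univ : Finset (Fin (m - 1))).card = m - 1 := by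
        simp
      rw [h1, h2]
      have h3 : k * k * (n ^ 2 - 1) = k ^ 2 * n ^ 2 - k ^ 2 := by
        rw [← pow_two, Nat.mul_sub, mul_one]
      have h4 : k ^ 2 ≤ k ^ 2 * n ^ 2 :=
        Nat.le_mul_of_pos_right _ (pow_pos hn _)
      have h5 : 1 ≤ k ^ 2 := Nat.one_le_pow _ _ hk1
      omega
    obtain ⟨v, hv, hcv⟩ := Finset.exists_lt_card_fiber_of_mul_lt_card_of_maps_to
      (fun a _ => Finset.mem_univ (g a)) hcard
    exact ⟨v, hv, hcv⟩
  obtain ⟨⟨a, b⟩, -, hfib⟩ := hpig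
  set F := Finset.univ.filter (fun q : Fin (m - 1) => g q = (a, b)) with hF
  have hFmem : ∀ q ∈ F, c ⟨(q : ℕ), by have := q.isLt; omega⟩ = a ∧
      c ⟨(q : ℕ) + 1, by have := q.isLt; omega⟩ = b := by
    intro q hq
    rw [hF, Finset.mem_filter] at hq
    have := hq.2
    rw [hg] at this
    exact ⟨congrArg Prod.fst this, congrArg Prod.snd this⟩
  have hab : a ≠ b := by
    have hpos : 0 < F.card := by
      have : 1 ≤ n ^ 2 := Nat.one_le_pow _ _ hn
      omega
    obtain ⟨q, hq⟩ := Finset.card_pos.mp hpos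
    obtain ⟨hqa, hqb⟩ := hFmem q hq
    intro hab'
    exact hcons (q : ℕ) (by have := q.isLt; omega) (by rw [hqa, hqb, hab'])
  -- injection from Fin n × Fin n into F
  have hcardle : Fintype.card (Fin n × Fin n) ≤ Fintype.card { x // x ∈ F } := by
    rw [Fintype.card_coe, Fintype.card_prod, Fintype.card_fin]
    have : n * n = n ^ 2 := (pow_two n).symm
    omega
  obtain ⟨ξ⟩ := Function.Embedding.nonempty_of_card_le hcardle
  set ξ' : Fin n × Fin n → Fin (m - 1) := fun ij => ((ξ ij : { x // x ∈ F }) : Fin (m - 1))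
    with hξ'
  have hξinj : Function.Injective ξ' := fun x y h => ξ.injective (Subtype.ext h)
  have hξa : ∀ ij : Fin n × Fin n,
      c ⟨(ξ' ij : ℕ), by have := (ξ' ij).isLt; omega⟩ = a :=
    fun ij => (hFmem (ξ' ij) (ξ ij).2).1
  have hξb : ∀ ij : Fin n × Fin n,
      c ⟨(ξ' ij : ℕ) + 1, by have := (ξ' ij).isLt; omega⟩ = b :=
    fun ij => (hFmem (ξ' ij) (ξ ij).2).2
  have hsep : ∀ ij ij' : Fin n × Fin n, ((ξ' ij : ℕ)) + 1 ≠ ((ξ' ij' : ℕ)) := by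
    intro ij ij' h
    apply hab
    have h1 := hξb ij
    have h2 := hξa ij'
    have h3 : c ⟨(ξ' ij' : ℕ), by have := (ξ' ij').isLt; omega⟩
        = c ⟨(ξ' ij : ℕ) + 1, by have := (ξ' ij).isLt; omega⟩ := congrArg c (Fin.ext h.symm)
    exact h2.symm.trans (h3.trans h1)
  -- the coordinate map
  set φ : Fin m → Fin (2 * n + k) := fun p =>
    if h1 : ∃ ij : Fin n × Fin n, ((ξ' ij : ℕ) = (p : ℕ)) then
      ⟨((h1.choose).1 : ℕ), by have := (h1.choose).1.isLt; omega⟩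
    else if h2 : ∃ ij : Fin n × Fin n, ((ξ' ij : ℕ) + 1 = (p : ℕ)) then
      ⟨n + ((h2.choose).2 : ℕ), by have := (h2.choose).2.isLt; omega⟩
    else ⟨2 * n + ((e (c p)) : ℕ), by have := (e (c p)).isLt; omega⟩
    with hφ
  have hφ1 : ∀ (ij : Fin n × Fin n) (hp : ((ξ' ij : ℕ)) < m),
      φ ⟨(ξ' ij : ℕ), hp⟩ = ⟨(ij.1 : ℕ), by have := ij.1.isLt; omega⟩ := by
    intro ij hp
    simp only [hφ]
    split_ifs with h1 h2
    · have hch := h1.choose_spec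
      have heq : h1.choose = ij := hξinj (Fin.ext hch)
      simp [heq]
    · exact absurd ⟨ij, rfl⟩ h1
    · exact absurd ⟨ij, rfl⟩ h1
  have hφ2 : ∀ (ij : Fin n × Fin n) (hp : ((ξ' ij : ℕ)) + 1 < m),
      φ ⟨(ξ' ij : ℕ) + 1, hp⟩ = ⟨n + (ij.2 : ℕ), by have := ij.2.isLt; omega⟩ := by
    intro ij hp
    simp only [hφ]
    split_ifs with h1 h2
    · obtain ⟨ij', h⟩ := h1
      exact absurd h.symm (hsep ij ij')
    · have hchoose : ∀ P : (∃ ij' : Fin n × Fin n,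
          (ξ' ij' : ℕ) + 1 = ((⟨(ξ' ij : ℕ) + 1, hp⟩ : Fin m) : ℕ)), P.choose = ij := by
        intro P
        have hsp := P.choose_spec
        apply hξinj
        apply Fin.ext
        have hred : ((⟨(ξ' ij : ℕ) + 1, hp⟩ : Fin m) : ℕ) = (ξ' ij : ℕ) + 1 := rfl
        omega
      congr 1
      rw [hchoose h2]
    · exact absurd ⟨ij, rfl⟩ h2
  have hφ3 : ∀ p : Fin m, (¬ ∃ ij : Fin n × Fin n, ((ξ' ij : ℕ) = (p : ℕ))) →
      (¬ ∃ ij : Fin n × Fin n, ((ξ' ij : ℕ) + 1 = (p : ℕ))) →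
      φ p = ⟨2 * n + ((e (c p)) : ℕ), by have := (e (c p)).isLt; omega⟩ := by
    intro p h1 h2
    simp only [hφ]
    rw [dif_neg h1, dif_neg h2]
  -- the relation
  refine ⟨{t : Fin (2 * n + k) → A | (fun p : Fin m => t (φ p)) ∈ ρ}, ?_, ?_, ?_⟩
  · -- closed
    intro i0 γ hγ
    exact hinv i0 (fun j => fun p => γ j (φ p)) (fun j => hγ j)
  · -- not univ
    set t₀ : Fin (2 * n + k) → A := fun v =>
      if (v : ℕ) < n then a else if (v : ℕ) < 2 * n then b
      else e.symm ⟨(v : ℕ) - 2 * n, by have := v.isLt; omega⟩ with ht₀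
    have key : (fun p : Fin m => t₀ (φ p)) = c := by
      funext p
      by_cases h1 : ∃ ij : Fin n × Fin n, ((ξ' ij : ℕ) = (p : ℕ))
      · obtain ⟨ij, hij⟩ := h1
        have hpeq : p = ⟨(ξ' ij : ℕ), by omega⟩ := Fin.ext hij.symm
        rw [hpeq, hφ1 ij]
        have h3 : t₀ ⟨(ij.1 : ℕ), by have := ij.1.isLt; omega⟩ = a := by
          simp only [ht₀]
          split_ifs with hlt1 hlt2
          · rfl
          · exact absurd ij.1.isLt hlt1
          · exact absurd ij.1.isLt hlt1
        rw [h3, hξa ij]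
      · by_cases h2 : ∃ ij : Fin n × Fin n, ((ξ' ij : ℕ) + 1 = (p : ℕ))
        · obtain ⟨ij, hij⟩ := h2
          have hpeq : p = ⟨(ξ' ij : ℕ) + 1, by omega⟩ := Fin.ext hij.symm
          rw [hpeq, hφ2 ij]
          have h3 : t₀ ⟨n + (ij.2 : ℕ), by have := ij.2.isLt; omega⟩ = b := by
            simp only [ht₀]
            split_ifs with hlt1 hlt2
            · have : n + (ij.2 : ℕ) < n := hlt1
              omega
            · rfl
            · have : ¬ n + (ij.2 : ℕ) < 2 * n := hlt2
              have := ij.2.isLt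
              omega
          rw [h3, hξb ij]
        · rw [hφ3 p h1 h2]
          have h3 : t₀ ⟨2 * n + ((e (c p)) : ℕ), by have := (e (c p)).isLt; omega⟩
              = e.symm ⟨2 * n + ((e (c p)) : ℕ) - 2 * n,
                  by have := (e (c p)).isLt; omega⟩ := by
            simp only [ht₀]
            split_ifs with hlt1 hlt2
            · have : 2 * n + ((e (c p)) : ℕ) < n := hlt1
              omega
            · have : 2 * n + ((e (c p)) : ℕ) < 2 * n := hlt2
              omega
            · rfl
          rw [h3]
          have h4 : (⟨2 * n + ((e (c p)) : ℕ) - 2 * n,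
              by have := (e (c p)).isLt; omega⟩ : Fin k) = e (c p) :=
            Fin.ext (by simp)
          rw [h4, Equiv.symm_apply_apply]
    intro huniv
    have ht₀mem : t₀ ∈ ({t : Fin (2 * n + k) → A | (fun p : Fin m => t (φ p)) ∈ ρ}) := by
      rw [huniv]; exact Set.mem_univ _
    rw [Set.mem_setOf_eq, key] at ht₀mem
    exact hc ht₀mem
  · -- containment
    rintro t ⟨i, j, hij⟩
    have hq : ((ξ' (i, j) : ℕ)) + 1 < m := by have := (ξ' (i, j)).isLt; omega
    apply hnice
    refine ⟨(ξ' (i, j) : ℕ), hq, ?_⟩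
    show t (φ ⟨(ξ' (i, j) : ℕ), by omega⟩) = t (φ ⟨(ξ' (i, j) : ℕ) + 1, hq⟩)
    rw [hφ1 (i, j), hφ2 (i, j)]
    exact hij
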